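/- For every triad (b,c,d) in the real Cayley–Dickson algebra 𝔸ₙ (all εᵢ = 1), either all three associators [b,d,c], [b,c,d], [c,b,d] are nonzero, or exactly one of them is nonzero and the other two vanish. -/

import Mathlib

noncomputable section

/-- The real Cayley–Dickson algebra carrier: `CD 0 = ℝ`, `CD (n+1) = CD n × CD n`. -/
def CD : ℕ → Type
  | 0 => ℝ
  | n + 1 => CD n × CD n

instance CD.instAddCommGroup : (n : ℕ) → AddCommGroup (CD n)
  | 0 => inferInstanceAs (AddCommGroup ℝ)
  | n + 1 =>
    letI := CD.instAddCommGroup n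
    inferInstanceAs (AddCommGroup (CD n × CD n))

instance CD.instModule : (n : ℕ) → Module ℝ (CD n)
  | 0 => inferInstanceAs (Module ℝ ℝ)
  | n + 1 =>
    letI := CD.instModule n
    inferInstanceAs (Module ℝ (CD n × CD n))

/-- The unit of the Cayley–Dickson algebra. -/
def CD.one : (n : ℕ) → CD n
  | 0 => (1 : ℝ)
  | n + 1 => (CD.one n, 0)

/-- Conjugation: `(a, b)* = (a*, -b)`, identity on `ℝ`. -/
def CD.conj : (n : ℕ) → CD n → CD n
  | 0, a => a
  | n + 1, x => (CD.conj n x.1, -x.2)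

/-- Cayley–Dickson multiplication with sign vector `ε`:
`(a,b)·(c,d) = (a·c − ε (n+1) • (d*·b), d·a + b·c*)`. -/
def CD.mul (ε : ℕ → ℝ) : (n : ℕ) → CD n → CD n → CD n
  | 0, a, c => (show ℝ from a) * (show ℝ from c)
  | n + 1, x, y =>
    (CD.mul ε n x.1 y.1 - ε (n + 1) • CD.mul ε n (CD.conj n y.2) x.2,
     CD.mul ε n y.2 x.1 + CD.mul ε n x.2 (CD.conj n y.1))

/-- The standard basis element `e α` of `CD n`, for `α ⊆ {1,…,n}`. -/
def CD.basis : (n : ℕ) → Finset ℕ → CD n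
  | 0, _ => (1 : ℝ)
  | n + 1, α =>
    if n + 1 ∈ α then ((0 : CD n), CD.basis n (α.erase (n + 1)))
    else (CD.basis n α, (0 : CD n))

/-- `α` indexes a pure basis element of `CD n`. -/
def CD.IsPure (n : ℕ) (α : Finset ℕ) : Prop :=
  α.Nonempty ∧ α ⊆ Finset.Icc 1 n

/-- The associator `[x,y,z] = (x·y)·z − x·(y·z)`. -/
def CD.assoc (ε : ℕ → ℝ) (n : ℕ) (x y z : CD n) : CD n :=
  CD.mul ε n (CD.mul ε n x y) z - CD.mul ε n x (CD.mul ε n y z)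

/-- A triad: indices of three pairwise distinct pure basis elements `b, c, d`
with `d ≠ ±(b·c)` (all signs `εᵢ = 1`). -/
def CD.IsTriad (n : ℕ) (α β γ : Finset ℕ) : Prop :=
  CD.IsPure n α ∧ CD.IsPure n β ∧ CD.IsPure n γ ∧
  α ≠ β ∧ α ≠ γ ∧ β ≠ γ ∧
  CD.basis n γ ≠ CD.mul (fun _ => 1) n (CD.basis n α) (CD.basis n β) ∧
  CD.basis n γ ≠ -CD.mul (fun _ => 1) n (CD.basis n α) (CD.basis n β)

/-- Multiplication with all signs `εᵢ = 1`. -/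
abbrev CD.mul1 (n : ℕ) : CD n → CD n → CD n := CD.mul (fun _ => 1) n

/-- Associator with all signs `εᵢ = 1`. -/
abbrev CD.assoc1 (n : ℕ) : CD n → CD n → CD n → CD n := CD.assoc (fun _ => 1) n

namespace Scratch
open Finset

lemma CD.mk_eq_zero {n : ℕ} (a b : CD n) : ((a, b) : CD (n+1)) = 0 ↔ a = 0 ∧ b = 0 :=
  Prod.mk_eq_zero

lemma CD.smul_mk {n : ℕ} (r : ℝ) (a b : CD n) : r • ((a, b) : CD (n+1)) = (r • a, r • b) := rfl

lemma CD.neg_mk {n : ℕ} (a b : CD n) : -((a, b) : CD (n+1)) = (-a, -b) := rfl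

lemma CD.conj_zero : ∀ n, CD.conj n 0 = 0
  | 0 => rfl
  | n + 1 => by
    show ((CD.conj n 0, -(0 : CD n)) : CD n × CD n) = 0
    rw [CD.conj_zero n, neg_zero]
    rfl

lemma CD.conj_smul : ∀ (n : ℕ) (r : ℝ) (x : CD n), CD.conj n (r • x) = r • CD.conj n x
  | 0, r, x => rfl
  | n + 1, r, x => by
    show ((CD.conj n (r • x.1), -(r • x.2)) : CD n × CD n) = (r • CD.conj n x.1, r • -x.2)
    rw [CD.conj_smul n, smul_neg]

mutual
lemma CD.mul_zero (ε : ℕ → ℝ) : ∀ n (x : CD n), CD.mul ε n x 0 = 0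
  | 0, x => by show (show ℝ from x) * 0 = 0; exact MulZeroClass.mul_zero _
  | n + 1, x => by
    show ((CD.mul ε n x.1 (0:CD n) - ε (n+1) • CD.mul ε n (CD.conj n (0:CD n)) x.2,
      CD.mul ε n (0:CD n) x.1 + CD.mul ε n x.2 (CD.conj n (0:CD n))) : CD n × CD n) = 0
    rw [CD.conj_zero, CD.mul_zero ε n, CD.zero_mul ε n, CD.zero_mul ε n, CD.mul_zero ε n,
      smul_zero, sub_zero, add_zero]
    rfl

lemma CD.zero_mul (ε : ℕ → ℝ) : ∀ n (x : CD n), CD.mul ε n 0 x = 0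
  | 0, x => by show (0:ℝ) * (show ℝ from x) = 0; exact MulZeroClass.zero_mul _
  | n + 1, x => by
    show ((CD.mul ε n (0:CD n) x.1 - ε (n+1) • CD.mul ε n (CD.conj n x.2) (0:CD n),
      CD.mul ε n x.2 (0:CD n) + CD.mul ε n (0:CD n) (CD.conj n x.1)) : CD n × CD n) = 0
    rw [CD.mul_zero ε n, CD.zero_mul ε n, CD.zero_mul ε n, CD.mul_zero ε n,
      smul_zero, sub_zero, add_zero]
    rfl
end

mutual
lemma CD.smul_mul (ε : ℕ → ℝ) : ∀ n (r : ℝ) (x y : CD n),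
    CD.mul ε n (r • x) y = r • CD.mul ε n x y
  | 0, r, x, y => by
    show (r * (show ℝ from x)) * (show ℝ from y) = r * ((show ℝ from x) * (show ℝ from y))
    ring
  | n + 1, r, x, y => by
    show ((CD.mul ε n (r • x.1) y.1 - ε (n+1) • CD.mul ε n (CD.conj n y.2) (r • x.2),
      CD.mul ε n y.2 (r • x.1) + CD.mul ε n (r • x.2) (CD.conj n y.1)) : CD n × CD n)
      = r • (CD.mul ε n x.1 y.1 - ε (n+1) • CD.mul ε n (CD.conj n y.2) x.2,
      CD.mul ε n y.2 x.1 + CD.mul ε n x.2 (CD.conj n y.1))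
    rw [CD.smul_mul ε n, CD.mul_smul ε n, CD.mul_smul ε n, CD.smul_mul ε n, CD.smul_mk,
      smul_sub, smul_add, smul_comm r (ε (n+1))]

lemma CD.mul_smul (ε : ℕ → ℝ) : ∀ n (r : ℝ) (x y : CD n),
    CD.mul ε n x (r • y) = r • CD.mul ε n x y
  | 0, r, x, y => by
    show (show ℝ from x) * (r * (show ℝ from y)) = r * ((show ℝ from x) * (show ℝ from y))
    ring
  | n + 1, r, x, y => by
    show ((CD.mul ε n x.1 (r • y.1) - ε (n+1) • CD.mul ε n (CD.conj n (r • y.2)) x.2,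
      CD.mul ε n (r • y.2) x.1 + CD.mul ε n x.2 (CD.conj n (r • y.1))) : CD n × CD n)
      = r • (CD.mul ε n x.1 y.1 - ε (n+1) • CD.mul ε n (CD.conj n y.2) x.2,
      CD.mul ε n y.2 x.1 + CD.mul ε n x.2 (CD.conj n y.1))
    rw [CD.conj_smul, CD.conj_smul, CD.mul_smul ε n, CD.smul_mul ε n, CD.smul_mul ε n,
      CD.mul_smul ε n, CD.smul_mk, smul_sub, smul_add, smul_comm r (ε (n+1))]

end

lemma CD.basis_ne_zero : ∀ (n : ℕ) (α : Finset ℕ), CD.basis n α ≠ 0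
  | 0, α => by show (1:ℝ) ≠ 0; norm_num
  | n + 1, α => by
    show (if n + 1 ∈ α then ((0 : CD n), CD.basis n (α.erase (n + 1)))
      else (CD.basis n α, (0 : CD n)) : CD n × CD n) ≠ 0
    split <;> rw [Ne, CD.mk_eq_zero] <;> simp [CD.basis_ne_zero n]

end Scratch
namespace Scratch
open Finset
open scoped symmDiff

/-- conjugation sign: 1 on ∅, -1 on nonempty. -/
def csgn (α : Finset ℕ) : ℝ := if α = ∅ then 1 else -1

/-- the sign in `e_α · e_β = sgn n α β • e_{α ∆ β}` (all ε = 1). -/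
def sgn : ℕ → Finset ℕ → Finset ℕ → ℝ
  | 0, _, _ => 1
  | n + 1, α, β =>
    if n + 1 ∈ α then
      if n + 1 ∈ β then
        -(csgn (β.erase (n+1))) * sgn n (β.erase (n+1)) (α.erase (n+1))
      else csgn β * sgn n (α.erase (n+1)) β
    else
      if n + 1 ∈ β then sgn n (β.erase (n+1)) α
      else sgn n α β

lemma csgn_pm (α : Finset ℕ) : csgn α = 1 ∨ csgn α = -1 := by
  unfold csgn; split <;> simp

lemma sgn_pm : ∀ (n : ℕ) (α β : Finset ℕ), sgn n α β = 1 ∨ sgn n α β = -1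
  | 0, α, β => Or.inl rfl
  | n + 1, α, β => by
    unfold sgn
    split
    · split
      · rcases csgn_pm (β.erase (n+1)) with h | h <;>
          rcases sgn_pm n (β.erase (n+1)) (α.erase (n+1)) with h' | h' <;>
          rw [h, h'] <;> norm_num
      · rcases csgn_pm β with h | h <;>
          rcases sgn_pm n (α.erase (n+1)) β with h' | h' <;> rw [h, h'] <;> norm_num
    · split
      · exact sgn_pm n _ _
      · exact sgn_pm n _ _

lemma subset_Icc_of_not_mem {n : ℕ} {α : Finset ℕ} (h : α ⊆ Finset.Icc 1 (n+1))
    (hn : n + 1 ∉ α) : α ⊆ Finset.Icc 1 n := by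
  intro x hx
  have h1 := h hx
  rw [Finset.mem_Icc] at h1 ⊢
  have : x ≠ n + 1 := fun e => hn (e ▸ hx)
  omega

lemma erase_subset_Icc {n : ℕ} {α : Finset ℕ} (h : α ⊆ Finset.Icc 1 (n+1)) :
    α.erase (n+1) ⊆ Finset.Icc 1 n := by
  intro x hx
  rw [Finset.mem_erase] at hx
  have h1 := h hx.2
  rw [Finset.mem_Icc] at h1 ⊢
  omega

lemma erase_symmDiff (k : ℕ) (s t : Finset ℕ) :
    (s ∆ t).erase k = s.erase k ∆ t.erase k := by
  ext x
  simp only [Finset.mem_erase, Finset.mem_symmDiff]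
  tauto

lemma symmDiff_subset_Icc {n : ℕ} {α β : Finset ℕ} (hα : α ⊆ Finset.Icc 1 n)
    (hβ : β ⊆ Finset.Icc 1 n) : α ∆ β ⊆ Finset.Icc 1 n := by
  intro x hx
  rw [Finset.mem_symmDiff] at hx
  rcases hx with ⟨h1, _⟩ | ⟨h1, _⟩
  · exact hα h1
  · exact hβ h1

lemma CD.conj_basis : ∀ (n : ℕ) (α : Finset ℕ), α ⊆ Finset.Icc 1 n →
    CD.conj n (CD.basis n α) = csgn α • CD.basis n α
  | 0, α, h => by
    have : α = ∅ := Finset.subset_empty.mp (by simpa using h)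
    subst this
    show (1:ℝ) = csgn ∅ * 1
    simp [csgn]
  | n + 1, α, h => by
    show CD.conj (n + 1) (if n + 1 ∈ α then ((0 : CD n), CD.basis n (α.erase (n + 1)))
      else (CD.basis n α, (0 : CD n)) : CD n × CD n) = csgn α • (if n + 1 ∈ α then
      ((0 : CD n), CD.basis n (α.erase (n + 1))) else (CD.basis n α, (0 : CD n)) : CD n × CD n)
    split
    · next hn =>
      have hne : α ≠ ∅ := fun e => by simp [e] at hn
      show ((CD.conj n 0, -(CD.basis n (α.erase (n+1)))) : CD n × CD n)
        = csgn α • ((0 : CD n), CD.basis n (α.erase (n+1)))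
      rw [CD.conj_zero, CD.smul_mk, smul_zero, csgn, if_neg hne, neg_smul, one_smul]
    · next hn =>
      show ((CD.conj n (CD.basis n α), -(0:CD n)) : CD n × CD n)
        = csgn α • (CD.basis n α, (0 : CD n))
      rw [CD.conj_basis n α (subset_Icc_of_not_mem h hn), CD.smul_mk, smul_zero, neg_zero]

end Scratch
namespace Scratch
open Finset
open scoped symmDiff

lemma CD.basis_succ_mem {n : ℕ} {α : Finset ℕ} (h : n+1 ∈ α) :
    CD.basis (n+1) α = ((0:CD n), CD.basis n (α.erase (n+1))) := by
  rw [CD.basis]; exact if_pos h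

lemma CD.basis_succ_not_mem {n : ℕ} {α : Finset ℕ} (h : n+1 ∉ α) :
    CD.basis (n+1) α = (CD.basis n α, (0:CD n)) := by
  rw [CD.basis]; exact if_neg h

lemma CD.mul_mk (ε : ℕ → ℝ) (n : ℕ) (a b c d : CD n) :
    CD.mul ε (n+1) ((a,b) : CD n × CD n) ((c,d) : CD n × CD n)
      = (CD.mul ε n a c - ε (n+1) • CD.mul ε n (CD.conj n d) b,
         CD.mul ε n d a + CD.mul ε n b (CD.conj n c)) := rfl

lemma sgn_mem_mem {n : ℕ} {α β : Finset ℕ} (hA : n+1 ∈ α) (hB : n+1 ∈ β) :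
    sgn (n+1) α β = -(csgn (β.erase (n+1))) * sgn n (β.erase (n+1)) (α.erase (n+1)) := by
  simp only [sgn, if_pos hA, if_pos hB]

lemma sgn_mem_not_mem {n : ℕ} {α β : Finset ℕ} (hA : n+1 ∈ α) (hB : n+1 ∉ β) :
    sgn (n+1) α β = csgn β * sgn n (α.erase (n+1)) β := by
  simp only [sgn, if_pos hA, if_neg hB]

lemma sgn_not_mem_mem {n : ℕ} {α β : Finset ℕ} (hA : n+1 ∉ α) (hB : n+1 ∈ β) :
    sgn (n+1) α β = sgn n (β.erase (n+1)) α := by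
  simp only [sgn, if_neg hA, if_pos hB]

lemma sgn_not_mem_not_mem {n : ℕ} {α β : Finset ℕ} (hA : n+1 ∉ α) (hB : n+1 ∉ β) :
    sgn (n+1) α β = sgn n α β := by
  simp only [sgn, if_neg hA, if_neg hB]

lemma CD.mul_basis : ∀ (n : ℕ) (α β : Finset ℕ), α ⊆ Finset.Icc 1 n → β ⊆ Finset.Icc 1 n →
    CD.mul (fun _ => (1:ℝ)) n (CD.basis n α) (CD.basis n β) = sgn n α β • CD.basis n (α ∆ β)
  | 0, α, β, hα, hβ => by
    show (1:ℝ) * 1 = (1:ℝ) • CD.basis 0 (α ∆ β)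
    show (1:ℝ) * 1 = (1:ℝ) • (1:ℝ)
    norm_num
  | n + 1, α, β, hα, hβ => by
    have hα' := erase_subset_Icc hα
    have hβ' := erase_subset_Icc hβ
    by_cases hA : n + 1 ∈ α <;> by_cases hB : n + 1 ∈ β
    · -- both contain n+1
      have hab : n+1 ∉ α ∆ β := by simp [Finset.mem_symmDiff, hA, hB]
      have hidx : β.erase (n+1) ∆ α.erase (n+1) = α ∆ β := by
        rw [← erase_symmDiff, symmDiff_comm β α, Finset.erase_eq_of_notMem hab]
      simp only [CD.basis_succ_mem hA, CD.basis_succ_mem hB, CD.basis_succ_not_mem hab,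
        CD.mul_mk, CD.zero_mul, CD.mul_zero, CD.conj_zero,
        CD.conj_basis n _ hβ', CD.smul_mul, CD.mul_basis n _ _ hβ' hα', hidx,
        sgn_mem_mem hA hB, smul_zero, smul_smul, one_smul, zero_sub,
        add_zero, zero_add, sub_zero, neg_smul, neg_mul]
      erw [CD.smul_mk]; change (_ : CD n × CD n) = _
      simp [CD.neg_mk, smul_zero, smul_smul, one_mul, neg_zero, Prod.mk.injEq]
    · -- n+1 ∈ α, n+1 ∉ β
      have hab : n+1 ∈ α ∆ β := by simp [Finset.mem_symmDiff, hA, hB]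
      have hβn : β ⊆ Finset.Icc 1 n := subset_Icc_of_not_mem hβ hB
      have hidx : α.erase (n+1) ∆ β = (α ∆ β).erase (n+1) := by
        rw [erase_symmDiff, Finset.erase_eq_of_notMem hB]
      simp only [CD.basis_succ_mem hA, CD.basis_succ_not_mem hB, CD.basis_succ_mem hab,
        CD.mul_mk, CD.zero_mul, CD.mul_zero, CD.conj_zero,
        CD.conj_basis n _ hβn, CD.mul_smul, CD.smul_mul, CD.mul_basis n _ _ hα' hβn, hidx,
        sgn_mem_not_mem hA hB, smul_zero, smul_smul, one_smul, zero_sub,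
        add_zero, zero_add, sub_zero, neg_smul, neg_mul]
      erw [CD.smul_mk]; change (_ : CD n × CD n) = _
      simp [CD.neg_mk, smul_zero, smul_smul, one_mul, neg_zero, Prod.mk.injEq]
    · -- n+1 ∉ α, n+1 ∈ β
      have hab : n+1 ∈ α ∆ β := by simp [Finset.mem_symmDiff, hA, hB]
      have hαn : α ⊆ Finset.Icc 1 n := subset_Icc_of_not_mem hα hA
      have hidx : β.erase (n+1) ∆ α = (α ∆ β).erase (n+1) := by
        rw [erase_symmDiff, Finset.erase_eq_of_notMem hA, symmDiff_comm]
      simp only [CD.basis_succ_not_mem hA, CD.basis_succ_mem hB, CD.basis_succ_mem hab,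
        CD.mul_mk, CD.zero_mul, CD.mul_zero, CD.conj_zero,
        CD.conj_basis n _ hβ', CD.mul_smul, CD.smul_mul, CD.mul_basis n _ _ hβ' hαn, hidx,
        sgn_not_mem_mem hA hB, smul_zero, smul_smul, one_smul, zero_sub,
        add_zero, zero_add, sub_zero, neg_smul, neg_mul]
      erw [CD.smul_mk]; change (_ : CD n × CD n) = _
      simp [CD.neg_mk, smul_zero, smul_smul, one_mul, neg_zero, Prod.mk.injEq]
    · -- neither
      have hab : n+1 ∉ α ∆ β := by simp [Finset.mem_symmDiff, hA, hB]
      have hαn : α ⊆ Finset.Icc 1 n := subset_Icc_of_not_mem hα hA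
      have hβn : β ⊆ Finset.Icc 1 n := subset_Icc_of_not_mem hβ hB
      simp only [CD.basis_succ_not_mem hA, CD.basis_succ_not_mem hB, CD.basis_succ_not_mem hab,
        CD.mul_mk, CD.zero_mul, CD.mul_zero, CD.conj_zero,
        CD.mul_basis n _ _ hαn hβn,
        sgn_not_mem_not_mem hA hB, smul_zero, smul_smul, one_smul, zero_sub,
        add_zero, zero_add, sub_zero, neg_smul, neg_mul]
      erw [CD.smul_mk]; change (_ : CD n × CD n) = _
      simp [CD.neg_mk, smul_zero, smul_smul, one_mul, neg_zero, Prod.mk.injEq]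

end Scratch
namespace Scratch
open Finset
open scoped symmDiff

lemma csgn_empty : csgn ∅ = 1 := by simp [csgn]

lemma csgn_of_nonempty {α : Finset ℕ} (h : α.Nonempty) : csgn α = -1 := by
  rw [csgn, if_neg (Finset.nonempty_iff_ne_empty.mp h)]

lemma sgn_empty_right : ∀ (n : ℕ) (α : Finset ℕ), sgn n α ∅ = 1
  | 0, α => rfl
  | n + 1, α => by
    by_cases hA : n + 1 ∈ α
    · rw [sgn_mem_not_mem hA (by simp), sgn_empty_right n, mul_one, csgn_empty]
    · rw [sgn_not_mem_not_mem hA (by simp), sgn_empty_right n]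

lemma sgn_empty_left : ∀ (n : ℕ) (β : Finset ℕ), sgn n ∅ β = 1
  | 0, β => rfl
  | n + 1, β => by
    by_cases hB : n + 1 ∈ β
    · rw [sgn_not_mem_mem (by simp) hB, sgn_empty_right n]
    · rw [sgn_not_mem_not_mem (by simp) hB, sgn_empty_left n]

lemma sgn_anticomm : ∀ (n : ℕ) (α β : Finset ℕ), α ⊆ Finset.Icc 1 n → β ⊆ Finset.Icc 1 n →
    α.Nonempty → β.Nonempty → α ≠ β → sgn n α β = -sgn n β α
  | 0, α, β, hα, hβ, hne, _, _ => by
    obtain ⟨x, hx⟩ := hne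
    simpa using hα hx
  | n + 1, α, β, hα, hβ, hαne, hβne, hne => by
    by_cases hA : n + 1 ∈ α <;> by_cases hB : n + 1 ∈ β
    · -- both
      have hee : α.erase (n+1) ≠ β.erase (n+1) := by
        intro e
        apply hne
        rw [← Finset.insert_erase hA, ← Finset.insert_erase hB, e]
      rw [sgn_mem_mem hA hB, sgn_mem_mem hB hA]
      by_cases hAe : α.erase (n+1) = ∅
      · have hBe : (β.erase (n+1)).Nonempty :=
          Finset.nonempty_iff_ne_empty.mpr (fun e => hee (by rw [hAe, e]))
        rw [hAe, csgn_empty, sgn_empty_left, csgn_of_nonempty hBe, sgn_empty_right]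
        norm_num
      · by_cases hBe : β.erase (n+1) = ∅
        · have hAe' : (α.erase (n+1)).Nonempty := Finset.nonempty_iff_ne_empty.mpr hAe
          rw [hBe, csgn_empty, sgn_empty_left, csgn_of_nonempty hAe', sgn_empty_right]
          norm_num
        · have hAe' : (α.erase (n+1)).Nonempty := Finset.nonempty_iff_ne_empty.mpr hAe
          have hBe' : (β.erase (n+1)).Nonempty := Finset.nonempty_iff_ne_empty.mpr hBe
          rw [csgn_of_nonempty hAe', csgn_of_nonempty hBe',
            sgn_anticomm n _ _ (erase_subset_Icc hβ) (erase_subset_Icc hα) hBe' hAe'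
              (fun e => hee e.symm)]
          ring
    · -- n+1 ∈ α only
      rw [sgn_mem_not_mem hA hB, sgn_not_mem_mem hB hA, csgn_of_nonempty hβne]
      ring
    · -- n+1 ∈ β only
      rw [sgn_not_mem_mem hA hB, sgn_mem_not_mem hB hA, csgn_of_nonempty hαne]
      ring
    · -- neither
      rw [sgn_not_mem_not_mem hA hB, sgn_not_mem_not_mem hB hA]
      exact sgn_anticomm n α β (subset_Icc_of_not_mem hα hA) (subset_Icc_of_not_mem hβ hB)
        hαne hβne hne

lemma CD.assoc_basis (n : ℕ) (α β γ : Finset ℕ) (hα : α ⊆ Finset.Icc 1 n)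
    (hβ : β ⊆ Finset.Icc 1 n) (hγ : γ ⊆ Finset.Icc 1 n) :
    CD.assoc (fun _ => (1:ℝ)) n (CD.basis n α) (CD.basis n β) (CD.basis n γ)
      = (sgn n α β * sgn n (α ∆ β) γ - sgn n β γ * sgn n α (β ∆ γ)) •
          CD.basis n (α ∆ β ∆ γ) := by
  unfold CD.assoc
  rw [CD.mul_basis n α β hα hβ, CD.smul_mul,
    CD.mul_basis n (α ∆ β) γ (symmDiff_subset_Icc hα hβ) hγ,
    CD.mul_basis n β γ hβ hγ, CD.mul_smul,
    CD.mul_basis n α (β ∆ γ) hα (symmDiff_subset_Icc hβ hγ),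
    smul_smul, smul_smul, ← symmDiff_assoc, ← sub_smul]

lemma CD.smul_ne_zero' {n : ℕ} {c : ℝ} (hc : c ≠ 0) {x : CD n} (hx : x ≠ 0) :
    c • x ≠ 0 := fun h => hx (by
  rw [← one_smul ℝ x, ← inv_mul_cancel₀ hc, ← smul_smul, h, smul_zero])

lemma key_signs (s1 s2 s3 u t1 t2 : ℝ)
    (h1 : s1 = 1 ∨ s1 = -1) (h2 : s2 = 1 ∨ s2 = -1) (h3 : s3 = 1 ∨ s3 = -1)
    (h4 : u = 1 ∨ u = -1) (h5 : t1 = 1 ∨ t1 = -1) (h6 : t2 = 1 ∨ t2 = -1) :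
    (s3 * (-u) - (-s2) * t2 ≠ 0 ∧ s1 * t1 - s2 * t2 ≠ 0 ∧ (-s1) * t1 - s3 * u ≠ 0) ∨
    (s3 * (-u) - (-s2) * t2 ≠ 0 ∧ s1 * t1 - s2 * t2 = 0 ∧ (-s1) * t1 - s3 * u = 0) ∨
    (s3 * (-u) - (-s2) * t2 = 0 ∧ s1 * t1 - s2 * t2 ≠ 0 ∧ (-s1) * t1 - s3 * u = 0) ∨
    (s3 * (-u) - (-s2) * t2 = 0 ∧ s1 * t1 - s2 * t2 = 0 ∧ (-s1) * t1 - s3 * u ≠ 0) := by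
  rcases h1 with rfl | rfl <;> rcases h2 with rfl | rfl <;> rcases h3 with rfl | rfl <;>
    rcases h4 with rfl | rfl <;> rcases h5 with rfl | rfl <;> rcases h6 with rfl | rfl <;>
    norm_num

end Scratch
namespace Scratch
open Finset
open scoped symmDiff

theorem stmt7' (n : ℕ) (α β γ : Finset ℕ) (h : CD.IsTriad n α β γ)
    (b c d : CD n) (hb : b = CD.basis n α) (hc : c = CD.basis n β)
    (hd : d = CD.basis n γ) :
    (CD.assoc1 n b d c ≠ 0 ∧ CD.assoc1 n b c d ≠ 0 ∧ CD.assoc1 n c b d ≠ 0) ∨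
    (CD.assoc1 n b d c ≠ 0 ∧ CD.assoc1 n b c d = 0 ∧ CD.assoc1 n c b d = 0) ∨
    (CD.assoc1 n b d c = 0 ∧ CD.assoc1 n b c d ≠ 0 ∧ CD.assoc1 n c b d = 0) ∨
    (CD.assoc1 n b d c = 0 ∧ CD.assoc1 n b c d = 0 ∧ CD.assoc1 n c b d ≠ 0) := by
  obtain ⟨⟨hαne, hα⟩, ⟨hβne, hβ⟩, ⟨hγne, hγ⟩, hab, hac, hbc, hd1, hd2⟩ := h
  subst hb; subst hc; subst hd
  have hγab : γ ≠ α ∆ β := by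
    intro e
    rcases sgn_pm n α β with hs | hs
    · exact hd1 (by rw [CD.mul_basis n α β hα hβ, hs, one_smul, e])
    · exact hd2 (by rw [CD.mul_basis n α β hα hβ, hs, e]; simp)
  have hacβ : α ∆ γ ≠ β := fun e => hγab (by rw [← e, symmDiff_symmDiff_cancel_left])
  have hagne : (α ∆ γ).Nonempty :=
    Finset.nonempty_iff_ne_empty.mpr
      (fun e => hac (symmDiff_eq_bot.mp (e.trans Finset.bot_eq_empty.symm)))
  have hαγ : α ∆ γ ⊆ Finset.Icc 1 n := symmDiff_subset_Icc hα hγ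
  have r1 : sgn n γ β = -sgn n β γ := sgn_anticomm n γ β hγ hβ hγne hβne (Ne.symm hbc)
  have r2 : sgn n (α ∆ γ) β = -sgn n β (α ∆ γ) :=
    sgn_anticomm n (α ∆ γ) β hαγ hβ hagne hβne hacβ
  have r3 : sgn n β α = -sgn n α β := sgn_anticomm n β α hβ hα hβne hαne (Ne.symm hab)
  have h1 := CD.assoc_basis n α γ β hα hγ hβ
  rw [r2, r1, symmDiff_comm γ β] at h1
  have h2 := CD.assoc_basis n α β γ hα hβ hγ
  have h3 := CD.assoc_basis n β α γ hβ hα hγ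
  rw [r3, symmDiff_comm β α] at h3
  unfold CD.assoc1
  rcases key_signs (sgn n α β) (sgn n β γ) (sgn n α γ) (sgn n β (α ∆ γ))
      (sgn n (α ∆ β) γ) (sgn n α (β ∆ γ)) (sgn_pm n α β) (sgn_pm n β γ) (sgn_pm n α γ)
      (sgn_pm n β (α ∆ γ)) (sgn_pm n (α ∆ β) γ) (sgn_pm n α (β ∆ γ)) with
    ⟨x1, x2, x3⟩ | ⟨x1, x2, x3⟩ | ⟨x1, x2, x3⟩ | ⟨x1, x2, x3⟩
  · exact Or.inl ⟨by rw [h1]; exact CD.smul_ne_zero' x1 (CD.basis_ne_zero n _),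
      by rw [h2]; exact CD.smul_ne_zero' x2 (CD.basis_ne_zero n _),
      by rw [h3]; exact CD.smul_ne_zero' x3 (CD.basis_ne_zero n _)⟩
  · exact Or.inr (Or.inl ⟨by rw [h1]; exact CD.smul_ne_zero' x1 (CD.basis_ne_zero n _),
      by rw [h2, x2, zero_smul], by rw [h3, x3, zero_smul]⟩)
  · exact Or.inr (Or.inr (Or.inl ⟨by rw [h1, x1, zero_smul],
      by rw [h2]; exact CD.smul_ne_zero' x2 (CD.basis_ne_zero n _),
      by rw [h3, x3, zero_smul]⟩))
  · exact Or.inr (Or.inr (Or.inr ⟨by rw [h1, x1, zero_smul], by rw [h2, x2, zero_smul],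
      by rw [h3]; exact CD.smul_ne_zero' x3 (CD.basis_ne_zero n _)⟩))
end Scratch
/-- (Non-associativity theorem.) For every triad `(b,c,d)`,
either all three associators `[b,d,c]`, `[b,c,d]`, `[c,b,d]` are nonzero, or
exactly one of them is nonzero and the other two vanish. -/
theorem stmt7 (n : ℕ) (α β γ : Finset ℕ) (h : CD.IsTriad n α β γ)
    (b c d : CD n) (hb : b = CD.basis n α) (hc : c = CD.basis n β)
    (hd : d = CD.basis n γ) :
    (CD.assoc1 n b d c ≠ 0 ∧ CD.assoc1 n b c d ≠ 0 ∧ CD.assoc1 n c b d ≠ 0) ∨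
    (CD.assoc1 n b d c ≠ 0 ∧ CD.assoc1 n b c d = 0 ∧ CD.assoc1 n c b d = 0) ∨
    (CD.assoc1 n b d c = 0 ∧ CD.assoc1 n b c d ≠ 0 ∧ CD.assoc1 n c b d = 0) ∨
    (CD.assoc1 n b d c = 0 ∧ CD.assoc1 n b c d = 0 ∧ CD.assoc1 n c b d ≠ 0) :=
  Scratch.stmt7' n α β γ h b c d hb hc hd
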